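/- Let a, b, a', b' be positive integers and r, r' integers with r^a ≡ 1 (mod b), gcd(a(r−1), b) = 1, r'^{a'} ≡ 1 (mod b'), and gcd(a'(r'−1), b') = 1. Then the groups G_{a,b,r} and G_{a',b',r'} are isomorphic if and only if a = a', b = b', and there exists an integer α with gcd(α, a) = 1 such that r^α ≡ r' (mod b). -/

import Mathlib

/-- The residue class of `r` as a unit of `ZMod b`, where invertibility follows from
`r ^ a ≡ 1 (mod b)` with `a ≠ 0`. -/
noncomputable def GabrUnit (a b : ℕ) (r : ℤ) (ha : a ≠ 0)
    (hr : r ^ a ≡ 1 [ZMOD (b : ℤ)]) : (ZMod b)ˣ :=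
  (IsUnit.of_pow_eq_one (a := ((r : ZMod b))) (n := a)
    (by
      have h : ((r ^ a : ℤ) : ZMod b) = ((1 : ℤ) : ZMod b) :=
        (ZMod.intCast_eq_intCast_iff _ _ _).mpr hr
      push_cast at h
      exact h) ha).unit

/-- Additive automorphisms of `α`, viewed as multiplicative automorphisms of
`Multiplicative α`. -/
def addAutToMulAut {α : Type*} [AddZeroClass α] :
    Multiplicative (AddAut α) →* MulAut (Multiplicative α) :=
  MonoidHom.mk' (fun f => AddEquiv.toMultiplicative f.toAdd) (fun f g => by ext x; rfl)

/-- The action homomorphism `ℤ/aℤ → Aut(ℤ/bℤ)` sending the generator `1` of `ℤ/aℤ` to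
multiplication by `r` on `ℤ/bℤ` (written multiplicatively). -/
noncomputable def GabrAct (a b : ℕ) (r : ℤ) (ha : a ≠ 0)
    (hr : r ^ a ≡ 1 [ZMOD (b : ℤ)]) :
    Multiplicative (ZMod a) →* MulAut (Multiplicative (ZMod b)) :=
  AddMonoidHom.toMultiplicativeLeft
    (ZMod.lift a ⟨zmultiplesHom _ (Additive.ofMul
        (addAutToMulAut (AddAut.mulLeft (GabrUnit a b r ha hr)))), by
      have hu : (GabrUnit a b r ha hr) ^ a = 1 := by
        ext
        push_cast
        rw [GabrUnit, IsUnit.unit_spec]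
        have h : ((r ^ a : ℤ) : ZMod b) = ((1 : ℤ) : ZMod b) :=
          (ZMod.intCast_eq_intCast_iff _ _ _).mpr hr
        push_cast at h
        exact h
      rw [zmultiplesHom_apply, ← ofMul_zpow, ofMul_eq_zero,
        zpow_natCast, ← map_pow, ← map_pow, hu, map_one, map_one]⟩)

/-- `G_{a,b,r}`: the semidirect product `(ℤ/bℤ) ⋊ (ℤ/aℤ)` in which the generator `1` of
`ℤ/aℤ` acts on `ℤ/bℤ` as multiplication by `r`. -/
abbrev Gabr (a b : ℕ) (r : ℤ) (ha : a ≠ 0) (hr : r ^ a ≡ 1 [ZMOD (b : ℤ)]) : Type :=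
  Multiplicative (ZMod b) ⋊[GabrAct a b r ha hr] Multiplicative (ZMod a)


open SemidirectProduct

section
variable (a b : ℕ) (r : ℤ) (ha : a ≠ 0) (hr : r ^ a ≡ 1 [ZMOD (b : ℤ)])

lemma gabrUnit_coe : ((GabrUnit a b r ha hr : (ZMod b)ˣ) : ZMod b) = (r : ZMod b) := by
  unfold GabrUnit; exact IsUnit.unit_spec _

lemma gabrUnit_pow_a : GabrUnit a b r ha hr ^ a = 1 := by
  ext
  push_cast
  rw [gabrUnit_coe]
  have h : ((r ^ a : ℤ) : ZMod b) = ((1 : ℤ) : ZMod b) :=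
    (ZMod.intCast_eq_intCast_iff _ _ _).mpr hr
  push_cast at h
  exact h

lemma gabrAct_apply (k : ℤ) (x : ZMod b) :
    GabrAct a b r ha hr (Multiplicative.ofAdd ((k : ZMod a))) (Multiplicative.ofAdd x)
      = Multiplicative.ofAdd (((GabrUnit a b r ha hr ^ k : (ZMod b)ˣ) : ZMod b) * x) := by
  have h1 : GabrAct a b r ha hr (Multiplicative.ofAdd ((k : ZMod a)))
      = addAutToMulAut (AddAut.mulLeft (GabrUnit a b r ha hr ^ k)) := by
    simp only [GabrAct, AddMonoidHom.coe_toMultiplicativeLeft, Function.comp_apply,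
      toAdd_ofAdd, ZMod.lift_coe]
    rw [zmultiplesHom_apply]
    rw [← ofMul_zpow, toMul_ofMul, ← map_zpow, ← map_zpow]
  rw [h1]
  rfl
end
section
open SemidirectProduct
open scoped commutatorElement
variable (a b : ℕ) (r : ℤ) (ha : a ≠ 0) (hr : r ^ a ≡ 1 [ZMOD (b : ℤ)])

lemma gabr_commutator_eq (hg : IsCoprime (r - 1) (b : ℤ)) :
    commutator (Gabr a b r ha hr) =
      (rightHom : Gabr a b r ha hr →* Multiplicative (ZMod a)).ker := by
  apply le_antisymm (Abelianization.commutator_subset_ker _)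
  rw [← range_inl_eq_ker_rightHom]
  rintro g ⟨m, rfl⟩
  obtain ⟨c, d, hcd⟩ := hg
  -- w : ZMod b with ((r : ZMod b) - 1) * w = toAdd m
  set n : ZMod b := Multiplicative.toAdd m with hn
  have hkey : ((r : ZMod b) - 1) * ((c : ZMod b) * n) = n := by
    have : ((c * (r - 1) + d * b : ℤ) : ZMod b) = ((1 : ℤ) : ZMod b) := by rw [hcd]
    push_cast at this
    rw [ZMod.natCast_self, mul_zero, add_zero] at this
    calc ((r : ZMod b) - 1) * ((c : ZMod b) * n) = ((c : ZMod b) * ((r:ZMod b) - 1)) * n := by ring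
    _ = n := by rw [this, one_mul]
  let xg : Gabr a b r ha hr := inr (Multiplicative.ofAdd ((1:ℤ) : ZMod a))
  let yg : Gabr a b r ha hr := inl (Multiplicative.ofAdd ((c : ZMod b) * n))
  have hcomm : ⁅xg, yg⁆ = inl (Multiplicative.ofAdd n) := by
    show inr (Multiplicative.ofAdd ((1:ℤ) : ZMod a)) *
        inl (Multiplicative.ofAdd ((c : ZMod b) * n)) *
        (inr (Multiplicative.ofAdd ((1:ℤ) : ZMod a)) : Gabr a b r ha hr)⁻¹ *
        (inl (Multiplicative.ofAdd ((c : ZMod b) * n)) : Gabr a b r ha hr)⁻¹ = _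
    have hxinv : (inr (Multiplicative.ofAdd ((1:ℤ) : ZMod a)) : Gabr a b r ha hr)⁻¹
        = inr ((Multiplicative.ofAdd ((1:ℤ) : ZMod a))⁻¹) := (map_inv _ _).symm
    have hyinv : (inl (Multiplicative.ofAdd ((c : ZMod b) * n)) : Gabr a b r ha hr)⁻¹
        = inl ((Multiplicative.ofAdd ((c : ZMod b) * n))⁻¹) := (map_inv _ _).symm
    rw [hxinv, hyinv, ← inl_aut, gabrAct_apply, ← map_mul, ← ofAdd_neg, ← ofAdd_add]
    congr 1
    rw [zpow_one, gabrUnit_coe]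
    have : (r : ZMod b) * ((c : ZMod b) * n) + -((c : ZMod b) * n) = n := by
      linear_combination hkey
    rw [this]
  rw [← ofAdd_toAdd m, ← hn, ← hcomm, commutator_def]
  exact Subgroup.commutator_mem_commutator (Subgroup.mem_top _) (Subgroup.mem_top _)

end
section
open SemidirectProduct

lemma zpow_eq_zpow_of_zmod {M : Type*} [Group M] (u : M) (a : ℕ) (hu : u ^ a = 1)
    {j k : ℤ} (h : ((j : ZMod a) = (k : ZMod a))) : u ^ j = u ^ k := by
  have hd : (a : ℤ) ∣ j - k := by
    rw [ZMod.intCast_eq_intCast_iff] at h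
    exact Int.ModEq.dvd h.symm
  obtain ⟨t, ht⟩ := hd
  have : j = k + a * t := by linarith
  rw [this, zpow_add, zpow_mul, zpow_natCast, hu, one_zpow, mul_one]

variable {a b : ℕ} {r r' : ℤ} (ha : a ≠ 0)
  (hr : r ^ a ≡ 1 [ZMOD (b : ℤ)]) (hr' : r' ^ a ≡ 1 [ZMOD (b : ℤ)])

/-- One direction of the construction: a hom `Gabr a b r → Gabr a b r'` given
`u' = u ^ α` and multiplier `β`. -/
noncomputable def gabrHom (α β : ℤ)
    (hu : GabrUnit a b r' ha hr' = GabrUnit a b r ha hr ^ α)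
    (hβ : ((α * β : ℤ) : ZMod a) = ((1 : ℤ) : ZMod a)) :
    Gabr a b r ha hr →* Gabr a b r' ha hr' :=
  lift inl (inr.comp (AddMonoidHom.toMultiplicative (AddMonoidHom.mulLeft ((β : ZMod a)))))
    (by
      intro g
      refine MonoidHom.ext fun n => ?_
      obtain ⟨k, hk⟩ := ZMod.intCast_surjective (Multiplicative.toAdd g)
      obtain ⟨x, hx⟩ := ZMod.intCast_surjective (Multiplicative.toAdd n)
      have hg : g = Multiplicative.ofAdd ((k : ZMod a)) := by rw [hk, ofAdd_toAdd]
      have hn : n = Multiplicative.ofAdd ((x : ZMod b)) := by rw [hx, ofAdd_toAdd]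
      rw [hg, hn]
      simp only [MonoidHom.comp_apply, MulEquiv.coe_toMonoidHom, MulAut.conj_apply]
      rw [gabrAct_apply]
      have h2 : (AddMonoidHom.toMultiplicative (AddMonoidHom.mulLeft ((β : ZMod a))))
          (Multiplicative.ofAdd ((k : ZMod a))) = Multiplicative.ofAdd (((β * k : ℤ) : ZMod a)) := by
        show Multiplicative.ofAdd ((β : ZMod a) * ((k:ℤ) : ZMod a)) = _
        push_cast
        ring_nf
      have hinv : (inr (Multiplicative.ofAdd ((β*k : ℤ) : ZMod a)) : Gabr a b r' ha hr')⁻¹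
          = inr ((Multiplicative.ofAdd ((β*k:ℤ) : ZMod a))⁻¹) := (map_inv _ _).symm
      rw [h2, hinv, ← inl_aut, gabrAct_apply]
      have hab : ((α : ZMod a) * (β : ZMod a)) = 1 := by
        push_cast at hβ; exact hβ
      have h3 : (GabrUnit a b r ha hr ^ α) ^ (β * k) = GabrUnit a b r ha hr ^ k := by
        rw [← zpow_mul]
        refine zpow_eq_zpow_of_zmod _ a (gabrUnit_pow_a a b r ha hr) ?_
        push_cast
        linear_combination ((k:ℤ) : ZMod a) * hab
      rw [hu, h3])
variable {ha hr hr'} in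
@[simp] lemma gabrHom_inl (α β : ℤ)
    (hu : GabrUnit a b r' ha hr' = GabrUnit a b r ha hr ^ α)
    (hβ : ((α * β : ℤ) : ZMod a) = ((1 : ℤ) : ZMod a)) (y : Multiplicative (ZMod b)) :
    gabrHom ha hr hr' α β hu hβ (inl y) = inl y := lift_inl _ _ _ _

variable {ha hr hr'} in
@[simp] lemma gabrHom_inr (α β : ℤ)
    (hu : GabrUnit a b r' ha hr' = GabrUnit a b r ha hr ^ α)
    (hβ : ((α * β : ℤ) : ZMod a) = ((1 : ℤ) : ZMod a)) (g : Multiplicative (ZMod a)) :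
    gabrHom ha hr hr' α β hu hβ (inr g)
      = inr ((AddMonoidHom.toMultiplicative (AddMonoidHom.mulLeft ((β : ZMod a)))) g) :=
  lift_inr _ _ _ _
end
section
open SemidirectProduct

variable {a b : ℕ} {r r' : ℤ} (ha : a ≠ 0)
  (hr : r ^ a ≡ 1 [ZMOD (b : ℤ)]) (hr' : r' ^ a ≡ 1 [ZMOD (b : ℤ)])

lemma gabr_equiv (α β : ℤ)
    (hu : GabrUnit a b r' ha hr' = GabrUnit a b r ha hr ^ α)
    (hβ : ((α * β : ℤ) : ZMod a) = ((1 : ℤ) : ZMod a)) :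
    Nonempty (Gabr a b r ha hr ≃* Gabr a b r' ha hr') := by
  have hu' : GabrUnit a b r ha hr = GabrUnit a b r' ha hr' ^ β := by
    rw [hu, ← zpow_mul]
    have : (GabrUnit a b r ha hr) ^ (α * β : ℤ) = (GabrUnit a b r ha hr) ^ (1 : ℤ) :=
      zpow_eq_zpow_of_zmod _ a (gabrUnit_pow_a a b r ha hr) hβ
    rw [this, zpow_one]
  have hβ' : ((β * α : ℤ) : ZMod a) = ((1 : ℤ) : ZMod a) := by rw [mul_comm]; exact hβ
  refine ⟨MonoidHom.toMulEquiv (gabrHom ha hr hr' α β hu hβ) (gabrHom ha hr' hr β α hu' hβ') ?_ ?_⟩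
  · apply hom_ext
    · refine MonoidHom.ext fun n => ?_
      simp only [MonoidHom.comp_apply, MonoidHom.id_apply, gabrHom_inl]
    · refine MonoidHom.ext fun g => ?_
      simp only [MonoidHom.comp_apply, MonoidHom.id_apply, gabrHom_inr]
      congr 1
      show Multiplicative.ofAdd ((α : ZMod a) * ((β : ZMod a) * (Multiplicative.toAdd g))) = g
      have h1 : ((α : ZMod a) * (β : ZMod a)) = 1 := by push_cast at hβ; exact hβ
      rw [← mul_assoc, h1, one_mul, ofAdd_toAdd]
  · apply hom_ext
    · refine MonoidHom.ext fun n => ?_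
      simp only [MonoidHom.comp_apply, MonoidHom.id_apply, gabrHom_inl]
    · refine MonoidHom.ext fun g => ?_
      simp only [MonoidHom.comp_apply, MonoidHom.id_apply, gabrHom_inr]
      congr 1
      show Multiplicative.ofAdd ((β : ZMod a) * ((α : ZMod a) * (Multiplicative.toAdd g))) = g
      have h1 : ((β : ZMod a) * (α : ZMod a)) = 1 := by push_cast at hβ'; exact hβ'
      rw [← mul_assoc, h1, one_mul, ofAdd_toAdd]

lemma gabr_card : Nat.card (Gabr a b r ha hr) = b * a := by
  have e : Gabr a b r ha hr ≃ Multiplicative (ZMod b) × Multiplicative (ZMod a) :=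
    ⟨fun g => (g.left, g.right), fun p => ⟨p.1, p.2⟩, fun g => rfl, fun p => rfl⟩
  rw [Nat.card_congr e, Nat.card_prod, Nat.card_congr Multiplicative.toAdd,
    Nat.card_congr Multiplicative.toAdd, Nat.card_zmod, Nat.card_zmod]

lemma gabr_card_commutator (hg : IsCoprime (r - 1) (b : ℤ)) :
    Nat.card (commutator (Gabr a b r ha hr)) = b := by
  rw [gabr_commutator_eq a b r ha hr hg, ← range_inl_eq_ker_rightHom,
    Nat.card_congr (MonoidHom.ofInjective inl_injective).toEquiv.symm,
    Nat.card_congr Multiplicative.toAdd, Nat.card_zmod]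

end
section
open SemidirectProduct Multiplicative

lemma mult_ofAdd_zpow {m : ℕ} (k : ℤ) (y : ZMod m) :
    (ofAdd y) ^ k = ofAdd (((k : ZMod m)) * y) := by
  rw [← ofAdd_zsmul, zsmul_eq_mul]

lemma mult_ofAdd_intCast {m : ℕ} (k : ℤ) :
    ofAdd ((k : ZMod m)) = (ofAdd ((1 : ZMod m))) ^ k := by
  rw [mult_ofAdd_zpow, mul_one]

lemma semidirect_conj_inl {N G : Type*} [CommGroup N] [Group G] {φ : G →* MulAut N}
    (E : N ⋊[φ] G) (y : N) : E * inl y * E⁻¹ = inl (φ E.right y) := by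
  ext <;>
    simp [mul_comm, mul_assoc, mul_left_comm]

variable {a b : ℕ} {r r' : ℤ}

lemma gabr_ker_map (ha : a ≠ 0) {r1 r2 : ℤ}
    (hr1 : r1 ^ a ≡ 1 [ZMOD (b : ℤ)]) (hr2 : r2 ^ a ≡ 1 [ZMOD (b : ℤ)])
    (hg1 : IsCoprime (r1 - 1) (b : ℤ)) (hg2 : IsCoprime (r2 - 1) (b : ℤ))
    (f : Gabr a b r1 ha hr1 ≃* Gabr a b r2 ha hr2) (g : Gabr a b r1 ha hr1)
    (hgk : rightHom g = 1) : rightHom (f g) = 1 := by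
  have h1 : g ∈ commutator (Gabr a b r1 ha hr1) := by
    rw [gabr_commutator_eq a b r1 ha hr1 hg1]; exact hgk
  have hmap : Subgroup.map f.toMonoidHom (commutator (Gabr a b r1 ha hr1))
      = commutator (Gabr a b r2 ha hr2) := by
    rw [commutator_def, Subgroup.map_commutator,
      Subgroup.map_top_of_surjective _ f.surjective, ← commutator_def]
  have h2 : f g ∈ commutator (Gabr a b r2 ha hr2) := by
    rw [← hmap]; exact ⟨g, h1, rfl⟩
  rwa [gabr_commutator_eq a b r2 ha hr2 hg2] at h2
end
section
open SemidirectProduct Multiplicative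

variable {a b : ℕ} {r r' : ℤ}

lemma gabr_forward (ha : a ≠ 0)
    (hr : r ^ a ≡ 1 [ZMOD (b : ℤ)]) (hr' : r' ^ a ≡ 1 [ZMOD (b : ℤ)])
    (hg : IsCoprime (r - 1) (b : ℤ)) (hg' : IsCoprime (r' - 1) (b : ℤ))
    (e : Gabr a b r ha hr ≃* Gabr a b r' ha hr') :
    ∃ α : ℤ, Int.gcd α (a : ℤ) = 1 ∧
      ((GabrUnit a b r ha hr ^ α : (ZMod b)ˣ) : ZMod b) = (r' : ZMod b) := by
  set u := GabrUnit a b r ha hr with hu_def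
  set u' := GabrUnit a b r' ha hr' with hu'_def
  -- the left scaling factor s
  have hE1 : e (inl (ofAdd (1 : ZMod b)))
      = inl (ofAdd (toAdd ((e (inl (ofAdd (1 : ZMod b)))).left))) := by
    have hk : rightHom (e (inl (ofAdd (1 : ZMod b)))) = 1 :=
      gabr_ker_map ha hr hr' hg hg' e _ (rightHom_inl _)
    conv_lhs => rw [← inl_left_mul_inr_right (e (inl (ofAdd (1 : ZMod b))))]
    rw [show (e (inl (ofAdd (1 : ZMod b)))).right = 1 from hk,
      map_one (inr : Multiplicative (ZMod a) →* Gabr a b r' ha hr'), mul_one, ofAdd_toAdd]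
  set s : ZMod b := toAdd ((e (inl (ofAdd (1 : ZMod b)))).left) with hs
  have hS : ∀ x : ZMod b, e (inl (ofAdd x)) = inl (ofAdd (x * s)) := by
    intro x
    obtain ⟨k, hk⟩ := ZMod.intCast_surjective (n := b) x
    rw [← hk, mult_ofAdd_intCast, map_zpow, map_zpow, hE1, ← map_zpow, mult_ofAdd_zpow]
  have hE1' : e.symm (inl (ofAdd (1 : ZMod b)))
      = inl (ofAdd (toAdd ((e.symm (inl (ofAdd (1 : ZMod b)))).left))) := by
    have hk : rightHom (e.symm (inl (ofAdd (1 : ZMod b)))) = 1 :=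
      gabr_ker_map ha hr' hr hg' hg e.symm _ (rightHom_inl _)
    conv_lhs => rw [← inl_left_mul_inr_right (e.symm (inl (ofAdd (1 : ZMod b))))]
    rw [show (e.symm (inl (ofAdd (1 : ZMod b)))).right = 1 from hk,
      map_one (inr : Multiplicative (ZMod a) →* Gabr a b r ha hr), mul_one, ofAdd_toAdd]
  set s2 : ZMod b := toAdd ((e.symm (inl (ofAdd (1 : ZMod b)))).left) with hs2
  have hS' : ∀ x : ZMod b, e.symm (inl (ofAdd x)) = inl (ofAdd (x * s2)) := by
    intro x
    obtain ⟨k, hk⟩ := ZMod.intCast_surjective (n := b) x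
    rw [← hk, mult_ofAdd_intCast, map_zpow, map_zpow, hE1', ← map_zpow, mult_ofAdd_zpow]
  have hss : s * s2 = 1 := by
    have h0 := hS' (1 * s)
    rw [← hS 1, MulEquiv.symm_apply_apply] at h0
    have h1 := inl_injective h0
    have h2 : (1 : ZMod b) = 1 * s * s2 := by simpa using h1
    rw [one_mul] at h2
    exact h2.symm
  -- the right scaling factor c
  set c : ZMod a := toAdd (rightHom (e (inr (ofAdd (1 : ZMod a))))) with hc
  have hT : ∀ k : ℤ, rightHom (e (inr (ofAdd ((k : ZMod a))))) = ofAdd ((k : ZMod a) * c) := by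
    intro k
    rw [mult_ofAdd_intCast, map_zpow, map_zpow, map_zpow,
      show rightHom (e (inr (ofAdd (1 : ZMod a)))) = ofAdd c from (ofAdd_toAdd _).symm,
      mult_ofAdd_zpow]
  set c2 : ZMod a := toAdd (rightHom (e.symm (inr (ofAdd (1 : ZMod a))))) with hc2
  have hT' : ∀ k : ℤ, rightHom (e.symm (inr (ofAdd ((k : ZMod a)))))
      = ofAdd ((k : ZMod a) * c2) := by
    intro k
    rw [mult_ofAdd_intCast, map_zpow, map_zpow, map_zpow,
      show rightHom (e.symm (inr (ofAdd (1 : ZMod a)))) = ofAdd c2 from (ofAdd_toAdd _).symm,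
      mult_ofAdd_zpow]
  obtain ⟨γ, hγ⟩ := ZMod.intCast_surjective (n := a) c
  obtain ⟨γ2, hγ2⟩ := ZMod.intCast_surjective (n := a) c2
  have hcc : c * c2 = 1 := by
    have hE : e (inr (ofAdd (1 : ZMod a)))
        = inl ((e (inr (ofAdd (1 : ZMod a)))).left) * inr (ofAdd c) := by
      conv_lhs => rw [← inl_left_mul_inr_right (e (inr (ofAdd (1 : ZMod a))))]
      congr 1
    have h0 : inr (ofAdd (1 : ZMod a)) = e.symm (e (inr (ofAdd (1 : ZMod a)))) :=
      (MulEquiv.symm_apply_apply _ _).symm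
    rw [hE, map_mul] at h0
    have h1 := congrArg rightHom h0
    rw [map_mul, gabr_ker_map ha hr' hr hg' hg e.symm _ (rightHom_inl _), one_mul,
      rightHom_inr, ← hγ, hT' γ, hγ] at h1
    have h2 : (1 : ZMod a) = c * c2 := by simpa using h1
    exact h2.symm
  -- main computation
  have hrel : (inr (ofAdd ((1:ℤ) : ZMod a)) : Gabr a b r ha hr) * inl (ofAdd ((1 : ZMod b)))
      * (inr (ofAdd ((1:ℤ) : ZMod a)) : Gabr a b r ha hr)⁻¹
      = inl (ofAdd (((u : ZMod b)) * 1)) := by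
    rw [show (inr (ofAdd ((1:ℤ) : ZMod a)) : Gabr a b r ha hr)⁻¹
      = inr ((ofAdd ((1:ℤ) : ZMod a))⁻¹) from (map_inv _ _).symm, ← inl_aut, gabrAct_apply,
      zpow_one]
  have hmain := congrArg e hrel
  rw [map_mul, map_mul, map_inv] at hmain
  simp only [hS] at hmain
  rw [semidirect_conj_inl] at hmain
  have hEr : (e (inr (ofAdd ((1:ℤ) : ZMod a)))).right = ofAdd ((γ : ZMod a)) := by
    have h3 := hT 1
    rw [Int.cast_one, one_mul] at h3
    rw [show (e (inr (ofAdd ((1:ℤ) : ZMod a)))).right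
      = rightHom (e (inr (ofAdd ((1:ℤ) : ZMod a)))) from rfl]
    rw [show ((1:ℤ) : ZMod a) = (1 : ZMod a) from Int.cast_one] at *
    rw [h3, hγ]
  rw [hEr, gabrAct_apply] at hmain
  have heq : ((u' ^ γ : (ZMod b)ˣ) : ZMod b) * (1 * s) = ((u : ZMod b) * 1) * s := by
    have h1 := inl_injective hmain
    simpa using h1
  have hcoe : ((u' ^ γ : (ZMod b)ˣ) : ZMod b) = (u : ZMod b) := by
    have h1 : ((u' ^ γ : (ZMod b)ˣ) : ZMod b) * (s * s2) = ((u : ZMod b)) * (s * s2) := by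
      rw [← mul_assoc, ← mul_assoc]
      rw [one_mul] at heq
      rw [heq]
      ring
    rwa [hss, mul_one, mul_one] at h1
  have huu' : u = u' ^ γ := Units.ext hcoe.symm
  have hZ : ((γ * γ2 : ℤ) : ZMod a) = ((1:ℤ) : ZMod a) := by
    push_cast
    rw [hγ, hγ2, hcc]
  have hdvd : (a : ℤ) ∣ 1 - γ * γ2 := ((ZMod.intCast_eq_intCast_iff _ _ _).mp hZ).dvd
  obtain ⟨t, ht⟩ := hdvd
  refine ⟨γ2, ?_, ?_⟩
  · rw [← Int.isCoprime_iff_gcd_eq_one]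
    exact ⟨γ, t, by linarith⟩
  · rw [huu', ← zpow_mul,
      zpow_eq_zpow_of_zmod _ a  (gabrUnit_pow_a a b r' ha hr') (k := 1) hZ, zpow_one]
    exact gabrUnit_coe a b r' ha hr'
end

/-- For parameters `(a, b, r)` and `(a', b', r')` as in the classification of
C-groups, the groups `G_{a,b,r}` and `G_{a',b',r'}` are isomorphic if and only if `a = a'`,
`b = b'`, and `r ^ α ≡ r' (mod b)` for some integer `α` coprime to `a` (the power `r ^ α` being
taken of the unit `r` of `ℤ/bℤ`). -/
theorem gabr_isomorphic_iff (a b a' b' : ℕ) (ha : 0 < a) (hb : 0 < b)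
    (ha' : 0 < a') (hb' : 0 < b') (r r' : ℤ)
    (hr : r ^ a ≡ 1 [ZMOD (b : ℤ)]) (hgcd : Int.gcd ((a : ℤ) * (r - 1)) b = 1)
    (hr' : r' ^ a' ≡ 1 [ZMOD (b' : ℤ)]) (hgcd' : Int.gcd ((a' : ℤ) * (r' - 1)) b' = 1) :
    Nonempty (Gabr a b r ha.ne' hr ≃* Gabr a' b' r' ha'.ne' hr') ↔
      (a = a' ∧ b = b' ∧ ∃ α : ℤ, Int.gcd α (a : ℤ) = 1 ∧
        ((GabrUnit a b r ha.ne' hr ^ α : (ZMod b)ˣ) : ZMod b) = (r' : ZMod b)) := by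
  constructor
  · rintro ⟨e⟩
    have cop : IsCoprime (r - 1) (b : ℤ) :=
      (Int.isCoprime_iff_gcd_eq_one.mpr hgcd).of_mul_left_right
    have cop' : IsCoprime (r' - 1) (b' : ℤ) :=
      (Int.isCoprime_iff_gcd_eq_one.mpr hgcd').of_mul_left_right
    have hbb : b = b' := by
      have h1 : Nat.card (commutator (Gabr a b r ha.ne' hr)) = b :=
        gabr_card_commutator ha.ne' hr cop
      have h2 : Nat.card (commutator (Gabr a' b' r' ha'.ne' hr')) = b' :=
        gabr_card_commutator ha'.ne' hr' cop'
      have hmap : Subgroup.map e.toMonoidHom (commutator (Gabr a b r ha.ne' hr))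
          = commutator (Gabr a' b' r' ha'.ne' hr') := by
        rw [commutator_def, Subgroup.map_commutator,
          Subgroup.map_top_of_surjective _ e.surjective, ← commutator_def]
      have h3 : Nat.card (commutator (Gabr a b r ha.ne' hr))
          = Nat.card (commutator (Gabr a' b' r' ha'.ne' hr')) := by
        rw [← hmap]
        exact Nat.card_congr
          (Subgroup.equivMapOfInjective _ _ e.injective).toEquiv
      omega
    have haa : a = a' := by
      have h4 : b * a = b' * a' := by
        rw [← gabr_card ha.ne' hr, ← gabr_card ha'.ne' hr', Nat.card_congr e.toEquiv]
      rw [← hbb] at h4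
      exact Nat.eq_of_mul_eq_mul_left hb h4
    subst hbb
    subst haa
    exact ⟨rfl, rfl, gabr_forward ha.ne' hr hr' cop cop' e⟩
  · rintro ⟨rfl, rfl, α, hα, hcoe⟩
    have hu : GabrUnit a b r' ha.ne' hr' = GabrUnit a b r ha.ne' hr ^ α :=
      Units.ext (by rw [gabrUnit_coe, ← hcoe])
    obtain ⟨m, n, hmn⟩ := Int.isCoprime_iff_gcd_eq_one.mpr hα
    have hβ : ((α * m : ℤ) : ZMod a) = ((1 : ℤ) : ZMod a) := by
      have h5 := congrArg (fun z : ℤ => (z : ZMod a)) hmn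
      push_cast at h5 ⊢
      rw [ZMod.natCast_self, mul_zero, add_zero] at h5
      linear_combination h5
    exact gabr_equiv ha.ne' hr hr' α m hu hβ
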